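/- The 54 vectors of minimal norm (norm 2) in θ(E₆^E)' = {(x,y,z) ∈ E³ : x+y+z ≡ 0 mod θ} are exactly the vectors obtained from (1,-1,0) by permuting coordinates, multiplying individual coordinates by cube roots of unity, and global negation. -/

import Mathlib

noncomputable section

def ω : ℂ := -1/2 + (Real.sqrt 3 / 2) * Complex.I
def θ : ℂ := ω - (starRingEnd ℂ) ω
def Eis : Subring ℂ := Subring.closure {ω}

/-- The standard Hermitian form on `ℂ³`. -/
def herm3 (x y : Fin 3 → ℂ) : ℂ := ∑ i, x i * (starRingEnd ℂ) (y i)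

/-- `θ(E₆^E)' = {(x,y,z) ∈ Eis³ : x+y+z ≡ 0 mod θ}`. -/
def T9 : Set (Fin 3 → ℂ) :=
  {x | (∀ i, x i ∈ Eis) ∧ ∃ e ∈ Eis, x 0 + x 1 + x 2 = θ * e}

lemma s3sq : Real.sqrt 3 ^ 2 = 3 := Real.sq_sqrt (by norm_num)
lemma s3pos : (0:ℝ) < Real.sqrt 3 := Real.sqrt_pos.2 (by norm_num)
lemma omega_re : ω.re = -1/2 := by simp [ω]
lemma omega_im : ω.im = Real.sqrt 3 / 2 := by simp [ω]

lemma hω2 : ω ^ 2 = -1 - ω := by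
  rw [Complex.ext_iff]
  constructor <;>
    simp [pow_two, Complex.mul_re, Complex.mul_im, omega_re, omega_im] <;>
    nlinarith [s3sq]

lemma hθ : θ = 1 + 2 * ω := by
  rw [Complex.ext_iff]
  constructor <;>
    (simp [θ, Complex.mul_re, Complex.mul_im, omega_re, omega_im]; ring_nf)

lemma omega_mem : ω ∈ Eis := Subring.subset_closure rfl

def gp (p : ℤ × ℤ) : ℂ := (p.1 : ℂ) + p.2 * ω
def g (q : Fin 3 → ℤ × ℤ) : Fin 3 → ℂ := fun i => gp (q i)
def Np (p : ℤ × ℤ) : ℤ := p.1^2 - p.1*p.2 + p.2^2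

lemma rep_mem (a b : ℤ) : (a:ℂ) + b * ω ∈ Eis :=
  add_mem (intCast_mem Eis a) (mul_mem (intCast_mem Eis b) omega_mem)

lemma rep_inj {a b a' b' : ℤ} (h : (a:ℂ) + b * ω = (a':ℂ) + b' * ω) : a = a' ∧ b = b' := by
  have him : (b:ℝ) * (Real.sqrt 3 / 2) = (b':ℝ) * (Real.sqrt 3 / 2) := by
    have := congrArg Complex.im h
    simpa [Complex.add_im, Complex.mul_im, omega_im, omega_re] using this
  have hb' : b = b' := by
    have := mul_right_cancel₀ (show (Real.sqrt 3 / 2) ≠ 0 by positivity) him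
    exact_mod_cast this
  subst hb'
  have hre := congrArg Complex.re h
  simp [Complex.add_re, Complex.mul_re, omega_re, omega_im] at hre
  exact ⟨by exact_mod_cast hre, rfl⟩

lemma gp_inj : Function.Injective gp := by
  rintro ⟨a,b⟩ ⟨c,d⟩ h
  obtain ⟨h1, h2⟩ := rep_inj h
  simp only [Prod.mk.injEq]
  exact ⟨h1, h2⟩

lemma g_inj : Function.Injective g := by
  intro q q' h
  funext i
  exact gp_inj (congrFun h i)

lemma mem_Eis {z : ℂ} : z ∈ Eis ↔ ∃ a b : ℤ, z = (a:ℂ) + b * ω := by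
  constructor
  · intro hz
    induction hz using Subring.closure_induction with
    | mem w hw =>
        rcases hw with rfl
        exact ⟨0, 1, by simp⟩
    | one => exact ⟨1, 0, by simp⟩
    | zero => exact ⟨0, 0, by simp⟩
    | add x y hx hy ihx ihy =>
        obtain ⟨a, b, rfl⟩ := ihx
        obtain ⟨c, d, rfl⟩ := ihy
        exact ⟨a + c, b + d, by push_cast; ring⟩
    | neg x hx ihx =>
        obtain ⟨a, b, rfl⟩ := ihx
        exact ⟨-a, -b, by push_cast; ring⟩
    | mul x y hx hy ihx ihy =>
        obtain ⟨a, b, rfl⟩ := ihx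
        obtain ⟨c, d, rfl⟩ := ihy
        refine ⟨a * c - b * d, a * d + b * c - b * d, ?_⟩
        have : ((a:ℂ) + b * ω) * ((c:ℂ) + d * ω)
            = (a*c : ℂ) + ((a*d : ℂ) + (b*c:ℂ)) * ω + (b*d:ℂ) * ω ^ 2 := by ring
        rw [this, hω2]
        push_cast
        ring
  · rintro ⟨a, b, rfl⟩
    exact rep_mem a b

lemma normSq_rep (a b : ℤ) :
    Complex.normSq ((a:ℂ) + b * ω) = ((a^2 - a*b + b^2 : ℤ) : ℝ) := by
  simp [Complex.normSq_apply, Complex.add_re, Complex.add_im, Complex.mul_re, Complex.mul_im,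
    omega_re, omega_im]
  push_cast
  nlinarith [s3sq]

lemma div_theta (a b : ℤ) :
    (∃ e ∈ Eis, (a:ℂ) + b * ω = θ * e) ↔ (a + b) % 3 = 0 := by
  constructor
  · rintro ⟨e, he, hx⟩
    obtain ⟨c, d, rfl⟩ := mem_Eis.1 he
    have : (a:ℂ) + b * ω = ((c - 2*d : ℤ):ℂ) + ((2*c - d : ℤ):ℂ) * ω := by
      rw [hx, hθ]
      have : (1 + 2*ω) * ((c:ℂ) + d * ω) = (c:ℂ) + ((2*c:ℂ) + d) * ω + (2*d:ℂ) * ω^2 := by ring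
      rw [this, hω2]
      push_cast
      ring
    obtain ⟨ha, hb⟩ := rep_inj this
    omega
  · intro h
    obtain ⟨m, hm⟩ : ∃ m, a + b = 3 * m := ⟨(a+b)/3, by omega⟩
    refine ⟨(b - m : ℤ) + (m - a : ℤ) * ω, rep_mem _ _, ?_⟩
    rw [hθ]
    have h1 : (1 + 2*ω) * (((b - m : ℤ):ℂ) + ((m - a : ℤ):ℂ) * ω)
        = ((b-m:ℤ):ℂ) + (2*((b-m:ℤ):ℂ) + ((m-a:ℤ):ℂ)) * ω + 2*((m-a:ℤ):ℂ) * ω^2 := by ring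
    rw [h1, hω2]
    have hm' : (a:ℂ) + b = 3 * m := by exact_mod_cast congrArg (Int.cast : ℤ → ℂ) hm
    push_cast
    linear_combination (-1 - ω) * hm'

lemma pair_zero {a b : ℤ} (h : a^2 - a*b + b^2 = 0) : a = 0 ∧ b = 0 := by
  constructor <;> nlinarith [sq_nonneg (2*a-b), sq_nonneg (2*b-a), sq_nonneg a, sq_nonneg b]

lemma Np_nonneg (p : ℤ × ℤ) : 0 ≤ Np p := by
  have := sq_nonneg (2*p.1 - p.2); have := sq_nonneg p.2
  unfold Np; nlinarith

lemma Np_ne_two (p : ℤ × ℤ) : Np p ≠ 2 := by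
  obtain ⟨a, b⟩ := p
  unfold Np
  intro h
  simp only at h
  have ha : -1 ≤ a ∧ a ≤ 1 := by
    constructor <;> nlinarith [sq_nonneg (2*b-a), sq_nonneg (a-2), sq_nonneg (a+2)]
  have hb : -1 ≤ b ∧ b ≤ 1 := by
    constructor <;> nlinarith [sq_nonneg (2*a-b), sq_nonneg (b-2), sq_nonneg (b+2)]
  obtain ⟨h1,h2⟩ := ha; obtain ⟨h3,h4⟩ := hb
  interval_cases a <;> interval_cases b <;> revert h <;> decide

lemma pair_one {a b : ℤ} (h : a^2 - a*b + b^2 = 1) :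
    (((a,b) = (1,0) ∨ (a,b) = (0,1) ∨ (a,b) = (-1,-1)) ∧ (a+b) % 3 = 1) ∨
    (((a,b) = (-1,0) ∨ (a,b) = (0,-1) ∨ (a,b) = (1,1)) ∧ (a+b) % 3 = 2) := by
  have ha : -1 ≤ a ∧ a ≤ 1 := by
    constructor <;> nlinarith [sq_nonneg (2*b-a), sq_nonneg (a-2), sq_nonneg (a+2)]
  have hb : -1 ≤ b ∧ b ≤ 1 := by
    constructor <;> nlinarith [sq_nonneg (2*a-b), sq_nonneg (b-2), sq_nonneg (b+2)]
  obtain ⟨h1,h2⟩ := ha; obtain ⟨h3,h4⟩ := hb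
  interval_cases a <;> interval_cases b <;> revert h <;> decide

def pairSet : Finset (ℤ × ℤ) := {(0,0),(1,0),(0,1),(-1,-1),(-1,0),(0,-1),(1,1)}

def good (q : Fin 3 → ℤ × ℤ) : Prop :=
  (∀ i, q i ∈ pairSet) ∧ Np (q 0) + Np (q 1) + Np (q 2) = 2 ∧
    ((q 0).1 + (q 1).1 + (q 2).1 + ((q 0).2 + (q 1).2 + (q 2).2)) % 3 = 0

instance : DecidablePred good := fun q => by unfold good; infer_instance

lemma herm3_g (q : Fin 3 → ℤ × ℤ) :
    herm3 (g q) (g q) = ((Np (q 0) + Np (q 1) + Np (q 2) : ℤ) : ℂ) := by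
  have h : ∀ i, g q i * (starRingEnd ℂ) (g q i) = ((Np (q i) : ℤ) : ℂ) := by
    intro i
    rw [Complex.mul_conj]
    rw [show g q i = ((q i).1 : ℂ) + ((q i).2 : ℂ) * ω from rfl, normSq_rep]
    norm_cast
  simp only [herm3, Fin.sum_univ_three, h]
  push_cast
  ring

lemma sum_g (q : Fin 3 → ℤ × ℤ) :
    g q 0 + g q 1 + g q 2
      = (((q 0).1 + (q 1).1 + (q 2).1 : ℤ) : ℂ) + (((q 0).2 + (q 1).2 + (q 2).2 : ℤ) : ℂ) * ω := by
  simp only [g, gp]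
  push_cast
  ring

lemma mem_iff (x : Fin 3 → ℂ) :
    (x ∈ T9 ∧ herm3 x x = 2) ↔ ∃ q, good q ∧ x = g q := by
  constructor
  · rintro ⟨⟨hmem, hdiv⟩, hnorm⟩
    choose a b hab using fun i => mem_Eis.1 (hmem i)
    refine ⟨fun i => (a i, b i), ⟨?_, ?_, ?_⟩, funext fun i => hab i⟩
    all_goals (
      have hx : x = g (fun i => (a i, b i)) := funext fun i => hab i)
    · -- each pair in pairSet
      have hsum : Np (a 0, b 0) + Np (a 1, b 1) + Np (a 2, b 2) = 2 := by
        rw [hx, herm3_g] at hnorm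
        exact_mod_cast hnorm
      intro i
      have h01 : Np (a i, b i) = 0 ∨ Np (a i, b i) = 1 := by
        have n0 := Np_nonneg (a 0, b 0); have n1 := Np_nonneg (a 1, b 1)
        have n2 := Np_nonneg (a 2, b 2)
        have t0 := Np_ne_two (a 0, b 0); have t1 := Np_ne_two (a 1, b 1)
        have t2 := Np_ne_two (a 2, b 2)
        fin_cases i <;> simp <;> omega
      rcases h01 with h | h
      · obtain ⟨ha0, hb0⟩ := pair_zero (by simpa [Np] using h)
        simp [ha0, hb0, pairSet]
      · rcases pair_one (by simpa [Np] using h) with ⟨hp, _⟩ | ⟨hp, _⟩ <;>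
          rcases hp with hp | hp | hp <;> simp_all [pairSet]
    · rw [hx, herm3_g] at hnorm
      exact_mod_cast hnorm
    · rw [hx] at hdiv
      rw [sum_g] at hdiv
      exact (div_theta _ _).1 hdiv
  · rintro ⟨q, ⟨hps, hn, hm⟩, rfl⟩
    refine ⟨⟨fun i => rep_mem _ _, ?_⟩, ?_⟩
    · rw [sum_g]
      exact (div_theta _ _).2 hm
    · rw [herm3_g, hn]
      norm_num

/-! ### Counting -/

def goodF : Finset (Fin 3 → ℤ × ℤ) := (Fintype.piFinset fun _ => pairSet).filter good

set_option maxHeartbeats 1000000 in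
lemma card54 : goodF.card = 54 := by decide

lemma set_eq_coe : {x | x ∈ T9 ∧ herm3 x x = 2} = ↑(goodF.image g) := by
  ext x
  rw [Set.mem_setOf_eq, mem_iff x]
  simp only [Finset.coe_image, Set.mem_image, Finset.mem_coe, goodF, Finset.mem_filter,
    Fintype.mem_piFinset]
  constructor
  · rintro ⟨q, hq, rfl⟩
    exact ⟨q, ⟨hq.1, hq⟩, rfl⟩
  · rintro ⟨q, ⟨_, hq⟩, rfl⟩
    exact ⟨q, hq, rfl⟩

lemma ncard54 : {x | x ∈ T9 ∧ herm3 x x = 2}.ncard = 54 := by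
  rw [set_eq_coe, Set.ncard_coe_finset, Finset.card_image_of_injective _ g_inj, card54]

/-! ### Minimality -/

lemma gp_zero : gp (0, 0) = 0 := by simp [gp]

lemma Np_big {p : ℤ × ℤ} (hne : p ≠ (0,0)) (hmod : (p.1 + p.2) % 3 = 0) : 3 ≤ Np p := by
  obtain ⟨a, b⟩ := p
  have hne' : ¬(a = 0 ∧ b = 0) := by simpa [Prod.ext_iff] using hne
  have h0 := Np_nonneg (a, b)
  have h2 := Np_ne_two (a, b)
  have h00 : Np (a, b) ≠ 0 := by
    intro h
    obtain ⟨ha, hb⟩ := pair_zero (show a^2 - a*b + b^2 = 0 from h)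
    exact hne' ⟨ha, hb⟩
  have h1 : Np (a, b) ≠ 1 := by
    intro h
    rcases pair_one (show a^2 - a*b + b^2 = 1 from h) with ⟨_, hm⟩ | ⟨_, hm⟩ <;>
      simp only at hm hmod <;> omega
  omega

lemma min_two : ∀ x ∈ T9, x ≠ 0 → (2 : ℝ) ≤ (herm3 x x).re := by
  intro x hx hne
  obtain ⟨hmem, hdiv⟩ := hx
  choose a b hab using fun i => mem_Eis.1 (hmem i)
  set q : Fin 3 → ℤ × ℤ := fun i => (a i, b i) with hq
  have hxg : x = g q := funext fun i => hab i
  have hre : (herm3 x x).re = ((Np (q 0) + Np (q 1) + Np (q 2) : ℤ) : ℝ) := by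
    rw [hxg, herm3_g]
    exact Complex.intCast_re _
  rw [hre]
  have hnn : ∀ i, 0 ≤ Np (q i) := fun i => Np_nonneg _
  have hzero : ∀ i, x i = 0 → q i = (0, 0) := by
    intro i h
    apply gp_inj
    rw [gp_zero, ← h, hxg]
    rfl
  have hone : ∀ i, x i ≠ 0 → 1 ≤ Np (q i) := by
    intro i h
    rcases lt_or_ge (Np (q i)) 1 with hlt | hge
    · exfalso
      have : Np (q i) = 0 := le_antisymm (by omega) (hnn i)
      obtain ⟨ha, hb⟩ := pair_zero (show (q i).1^2 - (q i).1*(q i).2 + (q i).2^2 = 0 from this)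
      apply h
      rw [hxg]
      show gp (q i) = 0
      rw [show q i = (0,0) from Prod.ext ha hb]
      exact gp_zero
    · exact hge
  -- case analysis on which coordinates vanish
  have key : 2 ≤ Np (q 0) + Np (q 1) + Np (q 2) := by
    by_cases h0 : x 0 = 0 <;> by_cases h1 : x 1 = 0 <;> by_cases h2 : x 2 = 0
    · exact absurd (funext fun i => by fin_cases i <;> assumption) hne
    · -- only x 2 nonzero
      have e0 := hzero 0 h0; have e1 := hzero 1 h1
      have hsum : x 0 + x 1 + x 2 = gp (q 2) := by
        rw [h0, h1, hxg]; simp [g]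
      have hd : ((q 2).1 + (q 2).2) % 3 = 0 := by
        apply (div_theta (q 2).1 (q 2).2).1
        obtain ⟨e, he, hse⟩ := hdiv
        exact ⟨e, he, by show gp (q 2) = θ * e; rw [← hsum]; exact hse⟩
      have := Np_big (fun h => h2 (by rw [hxg]; show gp (q 2) = 0; rw [h]; exact gp_zero)) hd
      have := hnn 0; have := hnn 1
      omega
    · -- only x 1 nonzero
      have hsum : x 0 + x 1 + x 2 = gp (q 1) := by
        rw [h0, h2, hxg]; simp [g]
      have hd : ((q 1).1 + (q 1).2) % 3 = 0 := by
        apply (div_theta (q 1).1 (q 1).2).1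
        obtain ⟨e, he, hse⟩ := hdiv
        exact ⟨e, he, by show gp (q 1) = θ * e; rw [← hsum]; exact hse⟩
      have := Np_big (fun h => h1 (by rw [hxg]; show gp (q 1) = 0; rw [h]; exact gp_zero)) hd
      have := hnn 0; have := hnn 2
      omega
    · have := hone 1 h1; have := hone 2 h2; have := hnn 0; omega
    · -- only x 0 nonzero
      have hsum : x 0 + x 1 + x 2 = gp (q 0) := by
        rw [h1, h2, hxg]; simp [g]
      have hd : ((q 0).1 + (q 0).2) % 3 = 0 := by
        apply (div_theta (q 0).1 (q 0).2).1
        obtain ⟨e, he, hse⟩ := hdiv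
        exact ⟨e, he, by show gp (q 0) = θ * e; rw [← hsum]; exact hse⟩
      have := Np_big (fun h => h0 (by rw [hxg]; show gp (q 0) = 0; rw [h]; exact gp_zero)) hd
      have := hnn 1; have := hnn 2
      omega
    · have := hone 0 h0; have := hone 2 h2; have := hnn 1; omega
    · have := hone 0 h0; have := hone 1 h1; have := hnn 2; omega
    · have := hone 0 h0; have := hone 1 h1; have := hnn 2; omega
  exact_mod_cast key

/-! ### Units and the RHS description -/

lemma normSq_omega : Complex.normSq ω = 1 := by
  simp [Complex.normSq_apply, omega_re, omega_im]
  nlinarith [s3sq]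

lemma normSq_unit {w : ℂ} (hw : w ∈ ({1, ω, ω ^ 2} : Set ℂ)) : Complex.normSq w = 1 := by
  rcases hw with rfl | rfl | rfl
  · simp
  · exact normSq_omega
  · rw [map_pow, normSq_omega, one_pow]

lemma unit_mem_Eis {w : ℂ} (hw : w ∈ ({1, ω, ω ^ 2} : Set ℂ)) : w ∈ Eis := by
  rcases hw with rfl | rfl | rfl
  · exact one_mem _
  · exact omega_mem
  · exact pow_mem omega_mem 2

lemma P_rep {w : ℂ} (hw : w ∈ ({1, ω, ω ^ 2} : Set ℂ)) :
    ∃ a b : ℤ, w = (a:ℂ) + b * ω ∧ (a + b) % 3 = 1 := by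
  rcases hw with rfl | rfl | rfl
  · exact ⟨1, 0, by norm_num, by decide⟩
  · exact ⟨0, 1, by norm_num, by decide⟩
  · exact ⟨-1, -1, by rw [hω2]; push_cast; ring, by decide⟩

lemma diffP {w w' : ℂ} (hw : w ∈ ({1, ω, ω ^ 2} : Set ℂ)) (hw' : w' ∈ ({1, ω, ω ^ 2} : Set ℂ)) :
    ∃ e ∈ Eis, w - w' = θ * e := by
  obtain ⟨a, b, rfl, hm⟩ := P_rep hw
  obtain ⟨c, d, rfl, hm'⟩ := P_rep hw'
  have h : (a:ℂ) + b * ω - ((c:ℂ) + d * ω) = ((a - c : ℤ):ℂ) + ((b - d : ℤ):ℂ) * ω := by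
    push_cast; ring
  rw [h]
  exact (div_theta _ _).2 (by omega)

lemma rhs_mem {x : Fin 3 → ℂ} (σ : Equiv.Perm (Fin 3)) (u : Fin 3 → ℂ)
    (hu : ∀ i, u i ∈ ({1, ω, ω ^ 2} : Set ℂ)) (s : ℂ) (hs : s = 1 ∨ s = -1)
    (hx : x = fun i => s * u i * ![1, -1, 0] (σ i)) : x ∈ T9 ∧ herm3 x x = 2 := by
  have hvE : ∀ j : Fin 3, (![1, -1, 0] : Fin 3 → ℂ) j ∈ Eis := by
    intro j
    fin_cases j
    · exact one_mem _
    · exact neg_mem (one_mem _)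
    · exact zero_mem _
  have hsE : s ∈ Eis := by rcases hs with rfl | rfl; exacts [one_mem _, neg_mem (one_mem _)]
  constructor; constructor
  · intro i
    rw [hx]
    exact mul_mem (mul_mem hsE (unit_mem_Eis (hu i))) (hvE (σ i))
  · -- divisibility of the sum
    have hsum : x 0 + x 1 + x 2 = s * (u (σ.symm 0) - u (σ.symm 1)) := by
      have h1 : x 0 + x 1 + x 2 = ∑ i, x i := (Fin.sum_univ_three x).symm
      have h2 : ∑ i, x i = ∑ j, s * u (σ.symm j) * ![1, -1, 0] j := by
        rw [hx]
        rw [← Equiv.sum_comp σ (fun j => s * u (σ.symm j) * ![1, -1, 0] j)]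
        simp [Equiv.symm_apply_apply]
      rw [h1, h2, Fin.sum_univ_three]
      simp
      ring
    obtain ⟨e, he, hde⟩ := diffP (hu (σ.symm 0)) (hu (σ.symm 1))
    exact ⟨s * e, mul_mem hsE he, by rw [hsum, hde]; ring⟩
  · -- norm 2
    have hterm : ∀ i, x i * (starRingEnd ℂ) (x i)
        = ((Complex.normSq ((![1, -1, 0] : Fin 3 → ℂ) (σ i)) : ℝ) : ℂ) := by
      intro i
      have hss : Complex.normSq s = 1 := by rcases hs with rfl | rfl <;> simp
      rw [hx]
      rw [Complex.mul_conj, map_mul, map_mul, normSq_unit (hu i), hss]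
      norm_num
    unfold herm3
    simp only [hterm]
    rw [Equiv.sum_comp σ (fun j => ((Complex.normSq ((![1, -1, 0] : Fin 3 → ℂ) j) : ℝ) : ℂ))]
    rw [Fin.sum_univ_three]
    norm_num
    rfl

lemma gp_omega2 : gp (-1, -1) = ω ^ 2 := by
  rw [hω2]; simp [gp]; ring

lemma gp_P {p : ℤ × ℤ} (hp : p = (1,0) ∨ p = (0,1) ∨ p = (-1,-1)) :
    gp p ∈ ({1, ω, ω ^ 2} : Set ℂ) := by
  rcases hp with rfl | rfl | rfl
  · left; simp [gp]
  · right; left; simp [gp]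
  · right; right; exact gp_omega2

lemma gp_M {p : ℤ × ℤ} (hp : p = (-1,0) ∨ p = (0,-1) ∨ p = (1,1)) :
    ∃ w ∈ ({1, ω, ω ^ 2} : Set ℂ), gp p = -w := by
  rcases hp with rfl | rfl | rfl
  · exact ⟨1, by left; rfl, by simp [gp]⟩
  · exact ⟨ω, by right; left; rfl, by simp [gp]⟩
  · refine ⟨ω ^ 2, by right; right; rfl, ?_⟩
    rw [hω2]; simp [gp]; ring

lemma build (x : Fin 3 → ℂ) (i1 i2 i3 : Fin 3) (σ : Equiv.Perm (Fin 3))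
    (hσ1 : σ i1 = 0) (hσ2 : σ i2 = 1) (hσ3 : σ i3 = 2)
    (huniv : ∀ i : Fin 3, i = i1 ∨ i = i2 ∨ i = i3)
    (h1 : x i1 ∈ ({1, ω, ω ^ 2} : Set ℂ))
    (h2 : ∃ w ∈ ({1, ω, ω ^ 2} : Set ℂ), x i2 = -w) (h3 : x i3 = 0) :
    ∃ σ' : Equiv.Perm (Fin 3), ∃ u : Fin 3 → ℂ,
      (∀ i, u i ∈ ({1, ω, ω ^ 2} : Set ℂ)) ∧
      ∃ s : ℂ, (s = 1 ∨ s = -1) ∧ x = fun i => s * u i * ![1, -1, 0] (σ' i) := by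
  obtain ⟨w, hwP, hxw⟩ := h2
  have n12 : i2 ≠ i1 := by intro h; rw [h, hσ1] at hσ2; exact absurd hσ2 (by decide)
  have n13 : i3 ≠ i1 := by intro h; rw [h, hσ1] at hσ3; exact absurd hσ3 (by decide)
  have n23 : i3 ≠ i2 := by intro h; rw [h, hσ2] at hσ3; exact absurd hσ3 (by decide)
  refine ⟨σ, fun i => if i = i1 then x i1 else if i = i2 then w else 1, ?_, 1, Or.inl rfl, ?_⟩
  · intro i
    by_cases e1 : i = i1
    · simpa [e1] using h1
    · by_cases e2 : i = i2
      · simpa [e1, e2, n12] using hwP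
      · simp [e1, e2]
  · funext i
    rcases huniv i with rfl | rfl | rfl
    · rw [hσ1]; simp
    · rw [hσ2]; simp [n12, hxw]
    · rw [hσ3]; simp [n13, n23, h3]

lemma pairSet_Np : ∀ p ∈ pairSet, Np p = 0 ∨ Np p = 1 := by decide

lemma pairSet_zero : ∀ p ∈ pairSet, Np p = 0 → p = (0, 0) := by decide

lemma S_subset_rhs {x : Fin 3 → ℂ} (h : x ∈ T9 ∧ herm3 x x = 2) :
    ∃ σ : Equiv.Perm (Fin 3), ∃ u : Fin 3 → ℂ,
      (∀ i, u i ∈ ({1, ω, ω ^ 2} : Set ℂ)) ∧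
      ∃ s : ℂ, (s = 1 ∨ s = -1) ∧ x = fun i => s * u i * ![1, -1, 0] (σ i) := by
  obtain ⟨q, ⟨hps, hn, hm⟩, rfl⟩ := (mem_iff x).1 h
  have hnp : ∀ i, Np (q i) = 0 ∨ Np (q i) = 1 := fun i => pairSet_Np _ (hps i)
  -- helper to analyse a unit coordinate
  have hone : ∀ i, Np (q i) = 1 →
      ((q i = (1,0) ∨ q i = (0,1) ∨ q i = (-1,-1)) ∧ ((q i).1 + (q i).2) % 3 = 1) ∨
      ((q i = (-1,0) ∨ q i = (0,-1) ∨ q i = (1,1)) ∧ ((q i).1 + (q i).2) % 3 = 2) := by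
    intro i hi
    have := pair_one (show (q i).1^2 - (q i).1*(q i).2 + (q i).2^2 = 1 from hi)
    rwa [Prod.mk.eta] at this
  have hzero : ∀ i, Np (q i) = 0 → (g q i = 0 ∧ (q i).1 = 0 ∧ (q i).2 = 0) := by
    intro i hi
    have hq0 := pairSet_zero _ (hps i) hi
    refine ⟨?_, by rw [hq0], by rw [hq0]⟩
    show gp (q i) = 0
    rw [hq0]; exact gp_zero
  have hPx : ∀ i, (q i = (1,0) ∨ q i = (0,1) ∨ q i = (-1,-1)) →
      g q i ∈ ({1, ω, ω ^ 2} : Set ℂ) := fun i hi => gp_P hi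
  have hMx : ∀ i, (q i = (-1,0) ∨ q i = (0,-1) ∨ q i = (1,1)) →
      ∃ w ∈ ({1, ω, ω ^ 2} : Set ℂ), g q i = -w := fun i hi => gp_M hi
  rcases hnp 0 with h0 | h0 <;> rcases hnp 1 with h1 | h1 <;> rcases hnp 2 with h2 | h2
  · omega
  · omega
  · omega
  · -- zero at 0, units at 1 and 2
    obtain ⟨hz, hz1, hz2⟩ := hzero 0 h0
    rcases hone 1 h1 with ⟨hp1, hm1⟩ | ⟨hp1, hm1⟩ <;> rcases hone 2 h2 with ⟨hp2, hm2⟩ | ⟨hp2, hm2⟩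
    · omega
    · exact build _ 1 2 0 (Equiv.ofBijective ![2,0,1] (by decide)) rfl rfl rfl (by decide)
        (hPx 1 hp1) (hMx 2 hp2) hz
    · exact build _ 2 1 0 (Equiv.ofBijective ![2,1,0] (by decide)) rfl rfl rfl (by decide)
        (hPx 2 hp2) (hMx 1 hp1) hz
    · omega
  · omega
  · -- zero at 1, units at 0 and 2
    obtain ⟨hz, hz1, hz2⟩ := hzero 1 h1
    rcases hone 0 h0 with ⟨hp1, hm1⟩ | ⟨hp1, hm1⟩ <;> rcases hone 2 h2 with ⟨hp2, hm2⟩ | ⟨hp2, hm2⟩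
    · omega
    · exact build _ 0 2 1 (Equiv.ofBijective ![0,2,1] (by decide)) rfl rfl rfl (by decide)
        (hPx 0 hp1) (hMx 2 hp2) hz
    · exact build _ 2 0 1 (Equiv.ofBijective ![1,2,0] (by decide)) rfl rfl rfl (by decide)
        (hPx 2 hp2) (hMx 0 hp1) hz
    · omega
  · -- zero at 2, units at 0 and 1
    obtain ⟨hz, hz1, hz2⟩ := hzero 2 h2
    rcases hone 0 h0 with ⟨hp1, hm1⟩ | ⟨hp1, hm1⟩ <;> rcases hone 1 h1 with ⟨hp2, hm2⟩ | ⟨hp2, hm2⟩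
    · omega
    · exact build _ 0 1 2 (Equiv.ofBijective ![0,1,2] (by decide)) rfl rfl rfl (by decide)
        (hPx 0 hp1) (hMx 1 hp2) hz
    · exact build _ 1 0 2 (Equiv.ofBijective ![1,0,2] (by decide)) rfl rfl rfl (by decide)
        (hPx 1 hp2) (hMx 0 hp1) hz
    · omega
  · omega

/-- The vectors of minimal norm 2 in `θ(E₆^E)'` are exactly the 54 vectors obtained
from `(1,-1,0)` by permuting coordinates, multiplying the coordinates by cube roots
of unity, and global negation. -/
theorem stmt9 :
    (∀ x ∈ T9, x ≠ 0 → (2 : ℝ) ≤ (herm3 x x).re) ∧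
    {x | x ∈ T9 ∧ herm3 x x = 2} =
      {x | ∃ σ : Equiv.Perm (Fin 3), ∃ u : Fin 3 → ℂ,
        (∀ i, u i ∈ ({1, ω, ω ^ 2} : Set ℂ)) ∧
        ∃ s : ℂ, (s = 1 ∨ s = -1) ∧ x = fun i => s * u i * ![1, -1, 0] (σ i)} ∧
    {x | x ∈ T9 ∧ herm3 x x = 2}.ncard = 54 := by
  refine ⟨min_two, ?_, ncard54⟩
  ext x
  constructor
  · exact fun h => S_subset_rhs h
  · rintro ⟨σ, u, hu, s, hs, hx⟩
    exact rhs_mem σ u hu s hs hx
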